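/- Suppose ε has a distribution symmetric about 0 with density g, and f = φ_σ is Gaussian. Then for any t > 0 and p = 1, μ* = 0 uniquely maximizes μ ↦ E[ln_t(φ_σ(ε - μ))] provided g is symmetric and unimodal (nonincreasing on [0,∞)). In particular, the MTE population objective for a symmetric-error location model is maximized at the true location. -/

import Mathlib

open MeasureTheory

noncomputable def lnt (t u : ℝ) : ℝ :=
  if t < u then Real.log u else Real.log t + (u - t) / t

noncomputable def gauss (σ r : ℝ) : ℝ :=
  Real.exp (-r ^ 2 / (2 * σ ^ 2)) / (σ * Real.sqrt (2 * Real.pi))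

/-! ### Auxiliary lemmas -/

lemma lnt_lt_lnt {t u v : ℝ} (ht : 0 < t) (hu : 0 < u) (huv : u < v) :
    lnt t u < lnt t v := by
  unfold lnt
  rcases lt_or_ge t u with h | h
  · rw [if_pos h, if_pos (h.trans huv)]
    exact Real.log_lt_log hu huv
  · rw [if_neg (not_lt.2 h)]
    rcases lt_or_ge t v with h2 | h2
    · rw [if_pos h2]
      have h3 : (u - t) / t ≤ 0 := by
        rw [div_nonpos_iff]; exact Or.inr ⟨by linarith, ht.le⟩
      have h4 : Real.log t < Real.log v := Real.log_lt_log ht h2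
      linarith
    · rw [if_neg (not_lt.2 h2)]
      have e : (v - t) / t - (u - t) / t = (v - u) / t := by ring
      have hp : 0 < (v - u) / t := div_pos (by linarith) ht
      linarith

lemma gauss_pos {σ : ℝ} (hσ : 0 < σ) (r : ℝ) : 0 < gauss σ r :=
  div_pos (Real.exp_pos _) (mul_pos hσ (Real.sqrt_pos.2 Real.two_pi_pos))

lemma gauss_even (σ r : ℝ) : gauss σ (-r) = gauss σ r := by
  simp [gauss, neg_sq]

lemma gauss_lt_gauss {σ r s : ℝ} (hσ : 0 < σ) (h : r ^ 2 < s ^ 2) :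
    gauss σ s < gauss σ r := by
  unfold gauss
  have hden : 0 < σ * Real.sqrt (2 * Real.pi) :=
    mul_pos hσ (Real.sqrt_pos.2 Real.two_pi_pos)
  have hK : 0 < 2 * σ ^ 2 := by positivity
  have hnum : Real.exp (-s ^ 2 / (2 * σ ^ 2)) < Real.exp (-r ^ 2 / (2 * σ ^ 2)) := by
    apply Real.exp_lt_exp.2
    have e : -r ^ 2 / (2 * σ ^ 2) - -s ^ 2 / (2 * σ ^ 2) = (s ^ 2 - r ^ 2) / (2 * σ ^ 2) := by
      ring
    have hp : 0 < (s ^ 2 - r ^ 2) / (2 * σ ^ 2) := div_pos (by linarith) hK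
    linarith
  have e2 : Real.exp (-r ^ 2 / (2 * σ ^ 2)) / (σ * Real.sqrt (2 * Real.pi)) -
      Real.exp (-s ^ 2 / (2 * σ ^ 2)) / (σ * Real.sqrt (2 * Real.pi)) =
      (Real.exp (-r ^ 2 / (2 * σ ^ 2)) - Real.exp (-s ^ 2 / (2 * σ ^ 2))) /
        (σ * Real.sqrt (2 * Real.pi)) := by ring
  have hp2 := div_pos (sub_pos.2 hnum) hden
  linarith

/-- The even loss function. -/
noncomputable def FF (σ t r : ℝ) : ℝ := lnt t (gauss σ r)

lemma FF_even (σ t r : ℝ) : FF σ t (-r) = FF σ t r := by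
  simp [FF, gauss_even]

lemma FF_lt {σ t r s : ℝ} (hσ : 0 < σ) (ht : 0 < t) (h : r ^ 2 < s ^ 2) :
    FF σ t s < FF σ t r :=
  lnt_lt_lnt ht (gauss_pos hσ s) (gauss_lt_gauss hσ h)

lemma FF_le {σ t r s : ℝ} (hσ : 0 < σ) (ht : 0 < t) (h : r ^ 2 ≤ s ^ 2) :
    FF σ t s ≤ FF σ t r := by
  rcases h.lt_or_eq with h | h
  · exact (FF_lt hσ ht h).le
  · have : gauss σ s = gauss σ r := by unfold gauss; rw [h]
    simp [FF, this]

lemma lnt_lower {t u : ℝ} (ht : 0 < t) (hu : 0 ≤ u) : Real.log t - 1 ≤ lnt t u := by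
  unfold lnt
  split_ifs with h
  · have h1 : Real.log t ≤ Real.log u := (Real.log_lt_log ht h).le
    linarith
  · have h1 : (-1 : ℝ) ≤ (u - t) / t := by
      rw [le_div_iff₀ ht]; linarith
    linarith

/-- A uniform bound for `FF`. -/
noncomputable def CC (σ t : ℝ) : ℝ := |FF σ t 0| + |Real.log t - 1|

lemma FF_abs_le {σ t : ℝ} (hσ : 0 < σ) (ht : 0 < t) (r : ℝ) :
    |FF σ t r| ≤ CC σ t := by
  have h1 : FF σ t r ≤ FF σ t 0 := FF_le hσ ht (by nlinarith [sq_nonneg r])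
  have h2 : Real.log t - 1 ≤ FF σ t r := lnt_lower ht (gauss_pos hσ r).le
  have h3 : FF σ t 0 ≤ |FF σ t 0| := le_abs_self _
  have h4 : -|Real.log t - 1| ≤ Real.log t - 1 := neg_abs_le _
  have h5 : (0:ℝ) ≤ |FF σ t 0| := abs_nonneg _
  have h6 : (0:ℝ) ≤ |Real.log t - 1| := abs_nonneg _
  rw [abs_le]
  constructor <;> [skip; skip] <;> unfold CC <;> linarith

lemma lnt_measurable (t : ℝ) : Measurable (lnt t) := by
  unfold lnt
  exact Measurable.ite (measurableSet_lt measurable_const measurable_id)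
    Real.measurable_log
    (measurable_const.add ((measurable_id.sub measurable_const).div_const t))

lemma gauss_continuous (σ : ℝ) : Continuous (gauss σ) := by
  unfold gauss
  exact (Real.continuous_exp.comp (((continuous_pow 2).neg).div_const _)).div_const _

lemma FF_measurable (σ t : ℝ) : Measurable (FF σ t) :=
  (lnt_measurable t).comp (gauss_continuous σ).measurable

/-- Interval integrability of bounded measurable functions. -/
lemma bdd_intervalIntegrable {f : ℝ → ℝ} (hf : Measurable f) {C : ℝ}
    (hC : ∀ x, |f x| ≤ C) (a b : ℝ) : IntervalIntegrable f volume a b := by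
  rw [intervalIntegrable_iff]
  refine Integrable.mono' (g := fun _ => C)
    (integrableOn_const measure_Ioc_lt_top.ne) hf.aestronglyMeasurable ?_
  exact Filter.Eventually.of_forall fun x => hC x

/-- Key interval identity: the centered integral minus the shifted integral. -/
lemma interval_key (σ t : ℝ) (hσ : 0 < σ) (ht : 0 < t) (m a : ℝ) :
    (∫ x in (-a)..a, (FF σ t x - FF σ t (x - m))) =
      ∫ y in (0:ℝ)..m, (FF σ t (y - a) - FF σ t (y + a)) := by
  have hmeas := FF_measurable σ t
  have hbd := FF_abs_le hσ ht
  have hii : ∀ c d e : ℝ, IntervalIntegrable (fun x => FF σ t (x - c)) volume d e := by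
    intro c d e
    exact bdd_intervalIntegrable ((hmeas).comp (measurable_id.sub measurable_const))
      (fun x => hbd _) d e
  have hii0 : ∀ d e : ℝ, IntervalIntegrable (FF σ t) volume d e :=
    fun d e => bdd_intervalIntegrable hmeas hbd d e
  have h1 : (∫ x in (-a)..a, (FF σ t x - FF σ t (x - m))) =
      (∫ x in (-a)..a, FF σ t x) - ∫ x in (-a)..a, FF σ t (x - m) :=
    intervalIntegral.integral_sub (hii0 _ _) (hii _ _ _)
  have h2 : (∫ x in (-a)..a, FF σ t (x - m)) = ∫ x in (m - a)..(m + a), FF σ t x := by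
    rw [intervalIntegral.integral_comp_sub_right (FF σ t) m]
    have e1 : (∫ x in (m - a)..(m + a), FF σ t x) =
        ∫ x in (m - a)..(m + a), FF σ t (-x) :=
      intervalIntegral.integral_congr fun x _ => (FF_even σ t x).symm
    rw [e1, intervalIntegral.integral_comp_neg (FF σ t)]
    congr 1 <;> ring
  have h3 : (∫ x in (-a)..a, FF σ t x) =
      (∫ x in (-a)..(m - a), FF σ t x) + ∫ x in (m - a)..a, FF σ t x :=
    (intervalIntegral.integral_add_adjacent_intervals (hii0 _ _) (hii0 _ _)).symm
  have h4 : (∫ x in (m - a)..(m + a), FF σ t x) =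
      (∫ x in (m - a)..a, FF σ t x) + ∫ x in a..(m + a), FF σ t x :=
    (intervalIntegral.integral_add_adjacent_intervals (hii0 _ _) (hii0 _ _)).symm
  have h5 : (∫ y in (0:ℝ)..m, FF σ t (y - a)) = ∫ x in (-a)..(m - a), FF σ t x := by
    rw [intervalIntegral.integral_comp_sub_right (FF σ t) a]
    congr 1 <;> ring
  have h6 : (∫ y in (0:ℝ)..m, FF σ t (y + a)) = ∫ x in a..(m + a), FF σ t x := by
    rw [intervalIntegral.integral_comp_add_right (FF σ t) a]
    congr 1 <;> ring
  have h7 : (∫ y in (0:ℝ)..m, (FF σ t (y - a) - FF σ t (y + a))) =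
      (∫ y in (0:ℝ)..m, FF σ t (y - a)) - ∫ y in (0:ℝ)..m, FF σ t (y + a) :=
    intervalIntegral.integral_sub (hii _ _ _)
      (by simpa [sub_neg_eq_add] using hii (-a) 0 m)
  rw [h1, h2, h3, h4, h7, h5, h6]
  ring

lemma interval_nonneg (σ t : ℝ) (hσ : 0 < σ) (ht : 0 < t) {m a : ℝ}
    (hm : 0 ≤ m) (ha : 0 ≤ a) :
    0 ≤ ∫ y in (0:ℝ)..m, (FF σ t (y - a) - FF σ t (y + a)) := by
  apply intervalIntegral.integral_nonneg hm
  intro y hy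
  have : (y - a) ^ 2 ≤ (y + a) ^ 2 := by nlinarith [hy.1]
  exact sub_nonneg.2 (FF_le hσ ht this)

lemma interval_pos (σ t : ℝ) (hσ : 0 < σ) (ht : 0 < t) {m a : ℝ}
    (hm : 0 < m) (ha : 0 < a) :
    0 < ∫ y in (0:ℝ)..m, (FF σ t (y - a) - FF σ t (y + a)) := by
  have hmeas := FF_measurable σ t
  have hbd := FF_abs_le hσ ht
  apply intervalIntegral.intervalIntegral_pos_of_pos_on
  · refine bdd_intervalIntegrable ?_ (C := 2 * CC σ t) ?_ 0 m
    · exact (hmeas.comp (measurable_id.sub measurable_const)).sub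
        (hmeas.comp (measurable_id.add measurable_const))
    · intro x
      calc |FF σ t (x - a) - FF σ t (x + a)| ≤ |FF σ t (x - a)| + |FF σ t (x + a)| :=
            abs_sub _ _
        _ ≤ 2 * CC σ t := by have := hbd (x - a); have := hbd (x + a); linarith
  · intro y hy
    have : (y - a) ^ 2 < (y + a) ^ 2 := by nlinarith [hy.1]
    exact sub_pos.2 (FF_lt hσ ht this)
  · exact hm

theorem mte_population_maximizer (σ t : ℝ) (hσ : 0 < σ) (ht : 0 < t)
    (g : ℝ → ℝ) (hg0 : ∀ x, 0 ≤ g x) (hg1 : (∫ x, g x) = 1)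
    (hgsym : ∀ x, g (-x) = g x) (hgmono : AntitoneOn g (Set.Ici 0))
    (hint : ∀ m : ℝ, Integrable (fun x => lnt t (gauss σ (x - m)) * g x)) :
    ∀ m : ℝ, m ≠ 0 →
      (∫ x, lnt t (gauss σ (x - m)) * g x) < ∫ x, lnt t (gauss σ x) * g x := by
  have habs : ∀ x, g |x| = g x := by
    intro x
    rcases le_or_gt 0 x with hx | hx
    · rw [abs_of_nonneg hx]
    · rw [abs_of_neg hx, hgsym]
  have hgmeas : Measurable g := by
    have h1 : Antitone fun x : ℝ => g (max x 0) := by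
      intro x y hxy
      exact hgmono (Set.mem_Ici.2 (le_max_right x 0)) (Set.mem_Ici.2 (le_max_right y 0))
        (max_le_max hxy le_rfl)
    have h2 : g = fun x => g (max |x| 0) := by
      funext x
      rw [max_eq_left (abs_nonneg x), habs]
    rw [h2]
    exact h1.measurable.comp measurable_abs
  have hgint : Integrable g := by
    by_contra h
    rw [integral_undef h] at hg1
    exact one_ne_zero hg1.symm
  have hFbd := FF_abs_le hσ ht
  have hFmeas := FF_measurable σ t
  -- existence of a point of positive density to the right of 0
  have hx₀ : ∃ x, 0 < x ∧ 0 < g x := by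
    by_contra hx
    push_neg at hx
    have hsub : {x : ℝ | ¬ g x = 0} ⊆ {(0 : ℝ)} := by
      intro x hx'
      simp only [Set.mem_singleton_iff]
      by_contra hx0
      have h1 : 0 < |x| := abs_pos.2 hx0
      have h2 : g |x| ≤ 0 := hx |x| h1
      rw [habs] at h2
      exact hx' (le_antisymm h2 (hg0 x))
    have hae : ∀ᵐ x, g x = 0 := by
      rw [MeasureTheory.ae_iff]
      exact measure_mono_null hsub (measure_singleton 0)
    rw [integral_eq_zero_of_ae hae] at hg1
    exact one_ne_zero hg1.symm
  -- the key inequality for positive shifts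
  have key : ∀ m : ℝ, 0 < m →
      (∫ x, lnt t (gauss σ (x - m)) * g x) < ∫ x, lnt t (gauss σ x) * g x := by
    intro m hm
    show (∫ x, FF σ t (x - m) * g x) < ∫ x, FF σ t x * g x
    set W : ℝ → ℝ := fun x => FF σ t x - FF σ t (x - m) with hWdef
    have hWmeas : Measurable W :=
      hFmeas.sub (hFmeas.comp (measurable_id.sub measurable_const))
    have hCC0 : 0 ≤ CC σ t := by
      have := hFbd 0
      have := abs_nonneg (FF σ t 0)
      linarith
    have hWbd : ∀ x, |W x| ≤ 2 * CC σ t := by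
      intro x
      have h1 := hFbd x
      have h2 := hFbd (x - m)
      calc |W x| ≤ |FF σ t x| + |FF σ t (x - m)| := abs_sub _ _
        _ ≤ 2 * CC σ t := by linarith
    have hint0 : Integrable (fun x => FF σ t x * g x) := by
      simpa [FF] using hint 0
    have hintm : Integrable (fun x => FF σ t (x - m) * g x) := hint m
    set S2 : Set (ℝ × ℝ) := {q : ℝ × ℝ | 0 < q.2 ∧ q.2 < g q.1} with hS2
    have hS2meas : MeasurableSet S2 :=
      (measurableSet_lt measurable_const measurable_snd).inter
        (measurableSet_lt measurable_snd (hgmeas.comp measurable_fst))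
    set Φ : ℝ × ℝ → ℝ := fun q => S2.indicator (fun q => W q.1) q with hΦ
    have hΦmeas : Measurable Φ := (hWmeas.comp measurable_fst).indicator hS2meas
    have hslice : ∀ x : ℝ, (fun c => Φ (x, c)) =
        (Set.Ioo (0:ℝ) (g x)).indicator (fun _ => W x) := by
      intro x
      funext c
      simp only [hΦ, hS2, Set.indicator_apply, Set.mem_setOf_eq, Set.mem_Ioo]
    have hΦint : Integrable Φ (volume.prod volume) := by
      refine (integrable_prod_iff hΦmeas.aestronglyMeasurable).2 ⟨?_, ?_⟩
      · refine Filter.Eventually.of_forall fun x => ?_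
        rw [hslice x]
        exact (integrable_indicator_iff measurableSet_Ioo).2
          (integrableOn_const measure_Ioo_lt_top.ne)
      · have he : (fun x => ∫ c, ‖Φ (x, c)‖) = fun x => g x * ‖W x‖ := by
          funext x
          have e1 : (fun c => ‖Φ (x, c)‖) =
              (Set.Ioo (0:ℝ) (g x)).indicator (fun _ => ‖W x‖) := by
            rw [show (fun c => ‖Φ (x, c)‖) = fun c => ‖(fun c => Φ (x, c)) c‖ from rfl,
              hslice x]
            funext c
            rw [norm_indicator_eq_indicator_norm]
          rw [e1, integral_indicator_const (‖W x‖) measurableSet_Ioo,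
            measureReal_def, Real.volume_Ioo, smul_eq_mul, sub_zero, ENNReal.toReal_ofReal (hg0 x)]
        rw [he]
        refine Integrable.mono' (hgint.const_mul (2 * CC σ t))
          (hgmeas.mul hWmeas.norm).aestronglyMeasurable ?_
        refine Filter.Eventually.of_forall fun x => ?_
        have h1 : ‖g x * ‖W x‖‖ = g x * ‖W x‖ :=
          Real.norm_of_nonneg (mul_nonneg (hg0 x) (norm_nonneg _))
        rw [h1]
        have h2 := hWbd x
        have h3 := hg0 x
        have h4 : ‖W x‖ = |W x| := rfl
        nlinarith [h2, h3]
    set ψ : ℝ → ℝ := fun c => ∫ x, Φ (x, c) with hψ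
    have hψint : Integrable ψ := hΦint.integral_prod_right
    have hswap : (∫ x, ∫ c, Φ (x, c)) = ∫ c, ψ c :=
      integral_integral_swap hΦint
    have hL : ∀ x, (∫ c, Φ (x, c)) = W x * g x := by
      intro x
      rw [hslice x, integral_indicator_const (W x) measurableSet_Ioo,
        measureReal_def, Real.volume_Ioo, smul_eq_mul, sub_zero, ENNReal.toReal_ofReal (hg0 x), mul_comm]
    have hD : (∫ x, FF σ t x * g x) - (∫ x, FF σ t (x - m) * g x) = ∫ c, ψ c := by
      have h1 : (∫ x, W x * g x) = ∫ x, ∫ c, Φ (x, c) := by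
        congr 1
        funext x
        rw [hL x]
      have h2 : (∫ x, W x * g x) =
          (∫ x, FF σ t x * g x) - ∫ x, FF σ t (x - m) * g x := by
        rw [← integral_sub hint0 hintm]
        congr 1
        funext x
        simp only [hWdef]
        ring
      rw [← h2, h1, hswap]
    -- analysis of ψ
    have hψfacts : ∀ c : ℝ, 0 ≤ ψ c ∧ ((0 < c ∧ ∃ x, 0 < x ∧ c < g x) → 0 < ψ c) := by
      intro c
      by_cases hc : 0 < c
      · by_cases hne : ∃ x, c < g x
        · obtain ⟨x₁, hx₁⟩ := hne
          set T : Set ℝ := {x : ℝ | 0 ≤ x ∧ c < g x} with hT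
          have hT₁ : |x₁| ∈ T := ⟨abs_nonneg x₁, by rw [habs]; exact hx₁⟩
          have hTbdd : BddAbove T := by
            by_contra hb
            have hIci : Set.Ici (0:ℝ) ⊆ {x | c ≤ g x} := by
              intro z hz
              obtain ⟨y, hyT, hzy⟩ := not_bddAbove_iff.1 hb z
              have h1 : g y ≤ g z := hgmono hz (hz.trans hzy.le) hzy.le
              exact le_of_lt (lt_of_lt_of_le hyT.2 h1)
            have hfin := hgint.measure_ge_lt_top hc
            have h2 : volume (Set.Ici (0:ℝ)) ≤ volume {x | c ≤ g x} := measure_mono hIci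
            rw [Real.volume_Ici] at h2
            exact absurd (lt_of_le_of_lt h2 hfin) (lt_irrefl ⊤)
          set a := sSup T with ha
          have haT : ∀ x ∈ T, x ≤ a := fun x hx => le_csSup hTbdd hx
          have ha0 : 0 ≤ a := le_trans (abs_nonneg x₁) (haT _ hT₁)
          have hSmeas : MeasurableSet {x : ℝ | c < g x} :=
            measurableSet_lt measurable_const hgmeas
          have hsub1 : {x : ℝ | c < g x} ⊆ Set.Icc (-a) a := by
            intro x hx
            have hxT : |x| ∈ T := ⟨abs_nonneg x, by rw [habs]; exact hx⟩
            have h1 := haT _ hxT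
            have h2 := neg_abs_le x
            have h3 := le_abs_self x
            exact ⟨by linarith, by linarith⟩
          have hsub2 : Set.Ioo (-a) a ⊆ {x : ℝ | c < g x} := by
            intro x hx
            have hxa : |x| < a := abs_lt.2 ⟨hx.1, hx.2⟩
            obtain ⟨y, hyT, hy⟩ := exists_lt_of_lt_csSup ⟨|x₁|, hT₁⟩ hxa
            have h1 : g y ≤ g |x| := hgmono (Set.mem_Ici.2 (abs_nonneg x)) hyT.1 hy.le
            have h2 : c < g |x| := lt_of_lt_of_le hyT.2 h1
            show c < g x
            rwa [habs] at h2
          have haeq : {x : ℝ | c < g x} =ᵐ[volume] Set.Ioo (-a) a := by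
            rw [MeasureTheory.ae_eq_set]
            constructor
            · refine measure_mono_null ?_
                (Set.Finite.measure_zero
                  ((Set.finite_singleton a).insert (-a)) volume)
              intro x hx
              have h1 := hsub1 hx.1
              have h2 := hx.2
              simp only [Set.mem_Ioo, not_and, not_lt] at h2
              simp only [Set.mem_insert_iff, Set.mem_singleton_iff]
              rcases eq_or_lt_of_le h1.1 with h3 | h3
              · exact Or.inl h3.symm
              · exact Or.inr (le_antisymm h1.2 (h2 h3))
            · have h0 : Set.Ioo (-a) a \ {x : ℝ | c < g x} = ∅ :=
                Set.diff_eq_empty.2 hsub2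
              rw [h0]
              exact measure_empty
          have hψc : ψ c = ∫ y in (0:ℝ)..m, (FF σ t (y - a) - FF σ t (y + a)) := by
            have hz : (fun x => Φ (x, c)) = ({x : ℝ | c < g x}).indicator W := by
              funext x
              simp only [hΦ, hS2, Set.indicator_apply, Set.mem_setOf_eq, hc, true_and]
            calc ψ c = ∫ x, Φ (x, c) := rfl
              _ = ∫ x, ({x : ℝ | c < g x}).indicator W x := by rw [hz]
              _ = ∫ x in {x : ℝ | c < g x}, W x := integral_indicator hSmeas
              _ = ∫ x in Set.Ioo (-a) a, W x := setIntegral_congr_set haeq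
              _ = ∫ x in Set.Ioc (-a) a, W x := setIntegral_congr_set Ioo_ae_eq_Ioc
              _ = ∫ x in (-a)..a, W x :=
                  (intervalIntegral.integral_of_le (by linarith)).symm
              _ = ∫ x in (-a)..a, (FF σ t x - FF σ t (x - m)) := by simp only [hWdef]
              _ = _ := interval_key σ t hσ ht m a
          constructor
          · rw [hψc]
            exact interval_nonneg σ t hσ ht hm.le ha0
          · rintro ⟨-, x₀, hx₀pos, hgx₀⟩
            have hx₀T : x₀ ∈ T := ⟨hx₀pos.le, hgx₀⟩
            have hax₀ : 0 < a := lt_of_lt_of_le hx₀pos (haT _ hx₀T)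
            rw [hψc]
            exact interval_pos σ t hσ ht hm hax₀
        · have hz : ψ c = 0 := by
            have h0 : ∀ x, Φ (x, c) = 0 := by
              intro x
              simp only [hΦ]
              apply Set.indicator_of_notMem
              rw [hS2]
              intro hmem
              exact hne ⟨x, hmem.2⟩
            calc ψ c = ∫ x, Φ (x, c) := rfl
              _ = 0 := by simp only [h0, integral_zero]
          refine ⟨le_of_eq hz.symm, ?_⟩
          rintro ⟨-, x₀, -, hgx₀⟩
          exact absurd ⟨x₀, hgx₀⟩ hne
      · have hz : ψ c = 0 := by
          have h0 : ∀ x, Φ (x, c) = 0 := by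
            intro x
            simp only [hΦ]
            apply Set.indicator_of_notMem
            rw [hS2]
            intro hmem
            exact hc hmem.1
          calc ψ c = ∫ x, Φ (x, c) := rfl
            _ = 0 := by simp only [h0, integral_zero]
        exact ⟨le_of_eq hz.symm, fun h => absurd h.1 hc⟩
    -- conclude
    obtain ⟨x₀, hx₀pos, hc₀⟩ := hx₀
    have h1 : 0 < ∫ c in Set.Ioo (0:ℝ) (g x₀), ψ c := by
      rw [setIntegral_pos_iff_support_of_nonneg_ae
        (Filter.Eventually.of_forall fun c => (hψfacts c).1) hψint.integrableOn]
      have hmlb : volume (Set.Ioo (0:ℝ) (g x₀)) ≤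
          volume (Function.support ψ ∩ Set.Ioo (0:ℝ) (g x₀)) := by
        refine measure_mono fun c hc => ?_
        exact ⟨((hψfacts c).2 ⟨hc.1, x₀, hx₀pos, hc.2⟩).ne', hc⟩
      have hvol : 0 < volume (Set.Ioo (0:ℝ) (g x₀)) := by
        rw [Real.volume_Ioo]
        simp [hc₀]
      exact lt_of_lt_of_le hvol hmlb
    have h2 : (∫ c in Set.Ioo (0:ℝ) (g x₀), ψ c) ≤ ∫ c, ψ c :=
      setIntegral_le_integral hψint (Filter.Eventually.of_forall fun c => (hψfacts c).1)
    have hDpos : 0 < ∫ c, ψ c := lt_of_lt_of_le h1 h2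
    linarith [hD]
  intro m hm0
  rcases hm0.lt_or_gt with hneg | hpos
  · have e : (∫ x, lnt t (gauss σ (x - m)) * g x)
        = ∫ x, lnt t (gauss σ (x - (-m))) * g x := by
      have h0 := integral_neg_eq_self (fun x => lnt t (gauss σ (x - m)) * g x) volume
      rw [← h0]
      refine integral_congr_ae (Filter.Eventually.of_forall fun x => ?_)
      show lnt t (gauss σ (-x - m)) * g (-x) = lnt t (gauss σ (x - (-m))) * g x
      rw [hgsym x, show -x - m = -(x - (-m)) by ring, gauss_even]
    rw [e]
    exact key (-m) (by linarith)
  · exact key m hpos
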